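/- Upper bound of Theorem 2 (bounded statistical parity): Let S, X, T, Y be jointly distributed random variables taking values in finite sets, and let r ≥ 0 and ε ≥ 0. If I(Y;S) ≤ ε and I(X;Y) ≤ r, then I(Y;T) ≤ min{H(T|S) + ε, H(T|X) + r}. -/
import Mathlib


open MeasureTheory ProbabilityTheory

/-- Shannon entropy (base 2) of a random variable with values in a finite type,
with the convention `0 · log₂ 0 = 0`. -/
noncomputable def ent {Ω α : Type*} [MeasurableSpace Ω] [Fintype α]
    (μ : Measure Ω) (X : Ω → α) : ℝ :=
  ∑ a : α, -((μ (X ⁻¹' {a})).toReal * Real.logb 2 ((μ (X ⁻¹' {a})).toReal))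

/-- Conditional Shannon entropy `H(X | Y)` (base 2). -/
noncomputable def condEnt {Ω α β : Type*} [MeasurableSpace Ω] [Fintype α] [Fintype β]
    (μ : Measure Ω) (X : Ω → α) (Y : Ω → β) : ℝ :=
  ent μ (fun ω => (X ω, Y ω)) - ent μ Y

/-- Mutual information `I(X ; Y)` (base 2). -/
noncomputable def mutInf {Ω α β : Type*} [MeasurableSpace Ω] [Fintype α] [Fintype β]
    (μ : Measure Ω) (X : Ω → α) (Y : Ω → β) : ℝ :=
  ent μ X + ent μ Y - ent μ (fun ω => (X ω, Y ω))

/-- Conditional mutual information `I(X ; Y | Z)` (base 2). -/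
noncomputable def condMutInf {Ω α β γ : Type*} [MeasurableSpace Ω] [Fintype α] [Fintype β]
    [Fintype γ] (μ : Measure Ω) (X : Ω → α) (Y : Ω → β) (Z : Ω → γ) : ℝ :=
  ent μ (fun ω => (X ω, Z ω)) + ent μ (fun ω => (Y ω, Z ω))
    - ent μ (fun ω => (X ω, Y ω, Z ω)) - ent μ Z

namespace UBparityAux

open Finset

/-- Gibbs' inequality (cross-entropy form, natural log). -/
lemma gibbs {ι : Type*} [Fintype ι] (w q : ι → ℝ) (hw : ∀ i, 0 ≤ w i)
    (hq : ∀ i, 0 ≤ q i) (h0 : ∀ i, q i = 0 → w i = 0)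
    (hsum : ∑ i, q i ≤ ∑ i, w i) :
    ∑ i, w i * Real.log (q i) ≤ ∑ i, w i * Real.log (w i) := by
  have key : ∀ i, w i * Real.log (q i) - w i * Real.log (w i) ≤ q i - w i := by
    intro i
    rcases eq_or_lt_of_le (hw i) with h | h
    · simp [← h]
      exact hq i
    · have hqpos : 0 < q i := by
        rcases eq_or_lt_of_le (hq i) with h' | h'
        · exfalso; have := h0 i h'.symm; linarith
        · exact h'
      have e1 : w i * Real.log (q i) - w i * Real.log (w i)
          = w i * Real.log (q i / w i) := by
        rw [Real.log_div (ne_of_gt hqpos) (ne_of_gt h)]; ring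
      rw [e1]
      have := Real.log_le_sub_one_of_pos (div_pos hqpos h)
      have h2 := mul_le_mul_of_nonneg_left this (le_of_lt h)
      calc w i * Real.log (q i / w i) ≤ w i * (q i / w i - 1) := h2
        _ = q i - w i := by field_simp
  have hs : ∑ i, (w i * Real.log (q i) - w i * Real.log (w i)) ≤ ∑ i, (q i - w i) :=
    Finset.sum_le_sum (fun i _ => key i)
  rw [Finset.sum_sub_distrib, Finset.sum_sub_distrib] at hs
  linarith

/-- Monotonicity: negentropy of the joint dominates negentropy of the marginal
over the middle coordinate. -/
lemma marg_mid {α β γ : Type*} [Fintype α] [Fintype β] [Fintype γ]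
    (p : α × β × γ → ℝ) (hp : ∀ x, 0 ≤ p x) :
    ∑ a, ∑ t, ∑ b, p (a, t, b) * Real.log (p (a, t, b)) ≤
      ∑ a, ∑ b, (∑ t, p (a, t, b)) * Real.log (∑ t, p (a, t, b)) := by
  have key : ∀ a t b, p (a, t, b) * Real.log (p (a, t, b)) ≤
      p (a, t, b) * Real.log (∑ t', p (a, t', b)) := by
    intro a t b
    rcases eq_or_lt_of_le (hp (a, t, b)) with h | h
    · rw [← h]; simp
    · refine mul_le_mul_of_nonneg_left ?_ (le_of_lt h)
      refine Real.log_le_log h ?_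
      exact Finset.single_le_sum (fun t' _ => hp (a, t', b)) (Finset.mem_univ t)
  calc ∑ a, ∑ t, ∑ b, p (a, t, b) * Real.log (p (a, t, b))
      ≤ ∑ a, ∑ t, ∑ b, p (a, t, b) * Real.log (∑ t', p (a, t', b)) := by
        refine Finset.sum_le_sum fun a _ => Finset.sum_le_sum fun t _ =>
          Finset.sum_le_sum fun b _ => key a t b
    _ = ∑ a, ∑ b, ∑ t, p (a, t, b) * Real.log (∑ t', p (a, t', b)) := by
        refine Finset.sum_congr rfl fun a _ => Finset.sum_comm
    _ = ∑ a, ∑ b, (∑ t, p (a, t, b)) * Real.log (∑ t, p (a, t, b)) := by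
        refine Finset.sum_congr rfl fun a _ => Finset.sum_congr rfl fun b _ => ?_
        rw [Finset.sum_mul]

/-- Submodularity, negentropy form. -/
lemma submod {α β γ : Type*} [Fintype α] [Fintype β] [Fintype γ]
    (p : α × β × γ → ℝ) (hp : ∀ x, 0 ≤ p x) :
    (∑ a, ∑ t, (∑ b, p (a, t, b)) * Real.log (∑ b, p (a, t, b)))
      + (∑ t, ∑ b, (∑ a, p (a, t, b)) * Real.log (∑ a, p (a, t, b)))
      - (∑ t, (∑ a, ∑ b, p (a, t, b)) * Real.log (∑ a, ∑ b, p (a, t, b)))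
      ≤ ∑ a, ∑ t, ∑ b, p (a, t, b) * Real.log (p (a, t, b)) := by
  classical
  set pab : α → β → ℝ := fun a t => ∑ b, p (a, t, b) with hpab
  set pbc : β → γ → ℝ := fun t b => ∑ a, p (a, t, b) with hpbc
  set pb : β → ℝ := fun t => ∑ a, ∑ b, p (a, t, b) with hpb
  have hpab_nn : ∀ a t, 0 ≤ pab a t := fun a t => Finset.sum_nonneg fun b _ => hp _
  have hpbc_nn : ∀ t b, 0 ≤ pbc t b := fun t b => Finset.sum_nonneg fun a _ => hp _
  have hpb_nn : ∀ t, 0 ≤ pb t := fun t =>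
    Finset.sum_nonneg fun a _ => Finset.sum_nonneg fun b _ => hp _
  have hle_ab : ∀ a t b, p (a, t, b) ≤ pab a t := fun a t b =>
    Finset.single_le_sum (fun b' _ => hp (a, t, b')) (Finset.mem_univ b)
  have hle_bc : ∀ a t b, p (a, t, b) ≤ pbc t b := fun a t b =>
    Finset.single_le_sum (fun a' _ => hp (a', t, b)) (Finset.mem_univ a)
  have hab_le_b : ∀ a t, pab a t ≤ pb t := fun a t =>
    Finset.single_le_sum (f := fun a' => ∑ b, p (a', t, b))
      (fun a' _ => Finset.sum_nonneg fun b _ => hp _) (Finset.mem_univ a)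
  have hle_b : ∀ a t b, p (a, t, b) ≤ pb t := fun a t b =>
    le_trans (hle_ab a t b) (hab_le_b a t)
  have hsum_bc : ∀ t, ∑ b, pbc t b = pb t := fun t => Finset.sum_comm
  set q : α × β × γ → ℝ := fun x =>
    if pb x.2.1 = 0 then 0 else pab x.1 x.2.1 * pbc x.2.1 x.2.2 / pb x.2.1 with hq
  have hq_nn : ∀ x, 0 ≤ q x := by
    rintro ⟨a, t, b⟩
    simp only [hq]
    split
    · exact le_refl 0
    · exact div_nonneg (mul_nonneg (hpab_nn a t) (hpbc_nn t b)) (hpb_nn t)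
  have h0 : ∀ x, q x = 0 → p x = 0 := by
    rintro ⟨a, t, b⟩ hx
    simp only [hq] at hx
    by_cases h : pb t = 0
    · linarith [hle_b a t b, hp (a, t, b)]
    · rw [if_neg h] at hx
      rcases div_eq_zero_iff.mp hx with h' | h'
      · rcases mul_eq_zero.mp h' with h'' | h''
        · linarith [hle_ab a t b, hp (a, t, b)]
        · linarith [hle_bc a t b, hp (a, t, b)]
      · exact absurd h' h
  have tsum : ∀ f : α × β × γ → ℝ, ∑ x, f x = ∑ a, ∑ t, ∑ b, f (a, t, b) := by
    intro f
    rw [Fintype.sum_prod_type]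
    exact Finset.sum_congr rfl fun a _ => Fintype.sum_prod_type (fun y => f (a, y))
  have hsumq : ∑ x, q x ≤ ∑ x, p x := by
    rw [tsum q, tsum p, Finset.sum_comm]
    have e2 : ∑ t, ∑ a, ∑ b, q (a, t, b) = ∑ t, if pb t = 0 then 0 else pb t := by
      refine Finset.sum_congr rfl fun t _ => ?_
      by_cases h : pb t = 0
      · simp [hq, h]
      · rw [if_neg h]
        have : ∀ a, ∑ b, q (a, t, b) = pab a t * pb t / pb t := by
          intro a
          simp only [hq, if_neg h]
          rw [← hsum_bc t, Finset.mul_sum, Finset.sum_div]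
        rw [Finset.sum_congr rfl fun a _ => this a, ← Finset.sum_div, ← Finset.sum_mul]
        have : ∑ a, pab a t = pb t := rfl
        rw [this]
        field_simp
    rw [e2]
    have e3 : ∑ a, ∑ t, ∑ b, p (a, t, b) = ∑ t, pb t := Finset.sum_comm
    rw [e3]
    refine Finset.sum_le_sum fun t _ => ?_
    by_cases h : pb t = 0 <;> simp [h, hpb_nn t]
  have G := gibbs p q hp hq_nn (fun i hi => h0 i hi) hsumq
  have E : ∀ a t b, p (a, t, b) * Real.log (q (a, t, b))
      = p (a, t, b) * Real.log (pab a t) + p (a, t, b) * Real.log (pbc t b)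
        - p (a, t, b) * Real.log (pb t) := by
    intro a t b
    rcases eq_or_lt_of_le (hp (a, t, b)) with h | h
    · rw [← h]; ring
    · have h1 : 0 < pab a t := lt_of_lt_of_le h (hle_ab a t b)
      have h2 : 0 < pbc t b := lt_of_lt_of_le h (hle_bc a t b)
      have h3 : 0 < pb t := lt_of_lt_of_le h (hle_b a t b)
      have : q (a, t, b) = pab a t * pbc t b / pb t := by
        simp only [hq]; rw [if_neg (ne_of_gt h3)]
      rw [this, Real.log_div (ne_of_gt (mul_pos h1 h2)) (ne_of_gt h3),
        Real.log_mul (ne_of_gt h1) (ne_of_gt h2)]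
      ring
  have Elhs : ∑ x, p x * Real.log (q x)
      = (∑ a, ∑ t, pab a t * Real.log (pab a t))
        + (∑ t, ∑ b, pbc t b * Real.log (pbc t b))
        - (∑ t, pb t * Real.log (pb t)) := by
    rw [tsum]
    have step : ∀ a t, ∑ b, p (a, t, b) * Real.log (q (a, t, b))
        = (∑ b, p (a, t, b) * Real.log (pbc t b))
          + pab a t * Real.log (pab a t) - pab a t * Real.log (pb t) := by
      intro a t
      rw [Finset.sum_congr rfl fun b _ => E a t b]
      rw [Finset.sum_sub_distrib, Finset.sum_add_distrib, ← Finset.sum_mul, ← Finset.sum_mul]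
      ring
    rw [Finset.sum_congr rfl fun a _ => Finset.sum_congr rfl fun t _ => step a t]
    simp only [Finset.sum_sub_distrib, Finset.sum_add_distrib]
    have e1 : ∑ a, ∑ t, ∑ b, p (a, t, b) * Real.log (pbc t b)
        = ∑ t, ∑ b, pbc t b * Real.log (pbc t b) := by
      rw [Finset.sum_comm]
      refine Finset.sum_congr rfl fun t _ => ?_
      rw [Finset.sum_comm]
      refine Finset.sum_congr rfl fun b _ => ?_
      rw [← Finset.sum_mul]
    have e2 : ∑ a, ∑ t, pab a t * Real.log (pb t)
        = ∑ t, pb t * Real.log (pb t) := by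
      rw [Finset.sum_comm]
      refine Finset.sum_congr rfl fun t _ => ?_
      rw [← Finset.sum_mul]
    rw [e1, e2]
    ring
  rw [Elhs, tsum (fun x => p x * Real.log (p x))] at G
  exact G

variable {Ω : Type*} [MeasurableSpace Ω] (μ : Measure Ω) [IsProbabilityMeasure μ]

/-- partition an event by the values of a random variable -/
lemma meas_part {κ : Type*} [Fintype κ] [MeasurableSpace κ] [MeasurableSingletonClass κ]
    (A : Set Ω) (hA : MeasurableSet A) (g : Ω → κ) (hg : Measurable g) :
    (μ A).toReal = ∑ k, (μ (A ∩ g ⁻¹' {k})).toReal := by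
  have hU : A = ⋃ k, A ∩ g ⁻¹' {k} := by
    ext ω; simp
  have hmeas : ∀ k, MeasurableSet (A ∩ g ⁻¹' {k}) :=
    fun k => hA.inter (hg (measurableSet_singleton k))
  have hdisj : Pairwise (Function.onFun Disjoint fun k => A ∩ g ⁻¹' {k}) := by
    intro k k' hkk'
    simp only [Function.onFun]
    rw [Set.disjoint_left]
    rintro ω ⟨-, h1⟩ ⟨-, h2⟩
    exact hkk' (by simp at h1 h2; rw [← h1, ← h2])
  calc (μ A).toReal = (μ (⋃ k, A ∩ g ⁻¹' {k})).toReal := by rw [← hU]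
    _ = (∑' k, μ (A ∩ g ⁻¹' {k})).toReal := by rw [measure_iUnion hdisj hmeas]
    _ = (∑ k, μ (A ∩ g ⁻¹' {k})).toReal := by rw [tsum_fintype]
    _ = ∑ k, (μ (A ∩ g ⁻¹' {k})).toReal :=
        ENNReal.toReal_sum (fun k _ => measure_ne_top μ _)

omit [IsProbabilityMeasure μ] in
/-- `ent` in terms of natural-log negentropy. -/
lemma ent_eq {α : Type*} [Fintype α] (X : Ω → α) :
    ent μ X = -(∑ a : α, (μ (X ⁻¹' {a})).toReal * Real.log ((μ (X ⁻¹' {a})).toReal))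
      / Real.log 2 := by
  unfold ent
  calc ∑ a : α, -((μ (X ⁻¹' {a})).toReal * Real.logb 2 ((μ (X ⁻¹' {a})).toReal))
      = ∑ a : α, (-((μ (X ⁻¹' {a})).toReal * Real.log ((μ (X ⁻¹' {a})).toReal)) / Real.log 2) :=
        Finset.sum_congr rfl fun a _ => by rw [Real.logb]; ring
    _ = (∑ a : α, -((μ (X ⁻¹' {a})).toReal * Real.log ((μ (X ⁻¹' {a})).toReal))) / Real.log 2 :=
        (Finset.sum_div _ _ _).symm
    _ = -(∑ a : α, (μ (X ⁻¹' {a})).toReal * Real.log ((μ (X ⁻¹' {a})).toReal)) / Real.log 2 := by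
        rw [Finset.sum_neg_distrib]

omit [IsProbabilityMeasure μ] in
lemma ent_pair_comm {α β : Type*} [Fintype α] [Fintype β] (f : Ω → α) (g : Ω → β) :
    ent μ (fun ω => (f ω, g ω)) = ent μ (fun ω => (g ω, f ω)) := by
  unfold ent
  refine Fintype.sum_equiv (Equiv.prodComm α β) _ _ ?_
  rintro ⟨a, b⟩
  have : (fun ω => (f ω, g ω)) ⁻¹' {(a, b)} = (fun ω => (g ω, f ω)) ⁻¹' {(b, a)} := by
    ext ω; simp [Prod.ext_iff, and_comm]
  rw [this]
  rfl

/-- Key entropy inequality: `H(T) + H(A,B) ≤ H(A,T) + H(T,B)`. -/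
lemma key_ent {α β γ : Type*}
    [Fintype α] [MeasurableSpace α] [MeasurableSingletonClass α]
    [Fintype β] [MeasurableSpace β] [MeasurableSingletonClass β]
    [Fintype γ] [MeasurableSpace γ] [MeasurableSingletonClass γ]
    (A : Ω → α) (B : Ω → β) (Tv : Ω → γ)
    (hA : Measurable A) (hB : Measurable B) (hTv : Measurable Tv) :
    ent μ Tv + ent μ (fun ω => (A ω, B ω)) ≤
      ent μ (fun ω => (A ω, Tv ω)) + ent μ (fun ω => (Tv ω, B ω)) := by
  classical
  set p : α × γ × β → ℝ :=
    fun x => (μ (A ⁻¹' {x.1} ∩ (Tv ⁻¹' {x.2.1} ∩ B ⁻¹' {x.2.2}))).toReal with hpdef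
  have hp : ∀ x, 0 ≤ p x := fun x => ENNReal.toReal_nonneg
  have mA : ∀ a, MeasurableSet (A ⁻¹' {a}) := fun a => hA (measurableSet_singleton a)
  have mB : ∀ b, MeasurableSet (B ⁻¹' {b}) := fun b => hB (measurableSet_singleton b)
  have mT : ∀ t, MeasurableSet (Tv ⁻¹' {t}) := fun t => hTv (measurableSet_singleton t)
  have M1 : ∀ a t, (μ ((fun ω => (A ω, Tv ω)) ⁻¹' {(a, t)})).toReal = ∑ b, p (a, t, b) := by
    intro a t
    have hset : (fun ω => (A ω, Tv ω)) ⁻¹' {(a, t)} = A ⁻¹' {a} ∩ Tv ⁻¹' {t} := by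
      ext ω; simp [Prod.ext_iff]
    rw [hset, meas_part μ _ ((mA a).inter (mT t)) B hB]
    refine Finset.sum_congr rfl fun b _ => ?_
    rw [Set.inter_assoc]
  have M2 : ∀ t b, (μ ((fun ω => (Tv ω, B ω)) ⁻¹' {(t, b)})).toReal = ∑ a, p (a, t, b) := by
    intro t b
    have hset : (fun ω => (Tv ω, B ω)) ⁻¹' {(t, b)} = Tv ⁻¹' {t} ∩ B ⁻¹' {b} := by
      ext ω; simp [Prod.ext_iff]
    rw [hset, meas_part μ _ ((mT t).inter (mB b)) A hA]
    refine Finset.sum_congr rfl fun a _ => ?_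
    rw [Set.inter_comm]
  have M3 : ∀ t, (μ (Tv ⁻¹' {t})).toReal = ∑ a, ∑ b, p (a, t, b) := by
    intro t
    rw [meas_part μ _ (mT t) A hA]
    refine Finset.sum_congr rfl fun a _ => ?_
    rw [meas_part μ _ ((mT t).inter (mA a)) B hB]
    refine Finset.sum_congr rfl fun b _ => ?_
    congr 2
    ext ω
    simp only [Set.mem_inter_iff, Set.mem_preimage, Set.mem_singleton_iff]
    tauto
  have M4 : ∀ a b, (μ ((fun ω => (A ω, B ω)) ⁻¹' {(a, b)})).toReal = ∑ t, p (a, t, b) := by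
    intro a b
    have hset : (fun ω => (A ω, B ω)) ⁻¹' {(a, b)} = A ⁻¹' {a} ∩ B ⁻¹' {b} := by
      ext ω; simp [Prod.ext_iff]
    rw [hset, meas_part μ _ ((mA a).inter (mB b)) Tv hTv]
    refine Finset.sum_congr rfl fun t _ => ?_
    congr 2
    ext ω
    simp only [Set.mem_inter_iff, Set.mem_preimage, Set.mem_singleton_iff]
    tauto
  have hsub := submod p hp
  have hmono := marg_mid p hp
  have hL : (0 : ℝ) < Real.log 2 := Real.log_pos one_lt_two
  have ET : ent μ Tv = -(∑ t, (∑ a, ∑ b, p (a, t, b)) * Real.log (∑ a, ∑ b, p (a, t, b)))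
      / Real.log 2 := by
    rw [ent_eq]
    congr 2
    exact Finset.sum_congr rfl fun t _ => by rw [M3 t]
  have EAT : ent μ (fun ω => (A ω, Tv ω))
      = -(∑ a, ∑ t, (∑ b, p (a, t, b)) * Real.log (∑ b, p (a, t, b))) / Real.log 2 := by
    rw [ent_eq]
    congr 2
    rw [Fintype.sum_prod_type]
    exact Finset.sum_congr rfl fun a _ => Finset.sum_congr rfl fun t _ => by rw [M1 a t]
  have ETB : ent μ (fun ω => (Tv ω, B ω))
      = -(∑ t, ∑ b, (∑ a, p (a, t, b)) * Real.log (∑ a, p (a, t, b))) / Real.log 2 := by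
    rw [ent_eq]
    congr 2
    rw [Fintype.sum_prod_type]
    exact Finset.sum_congr rfl fun t _ => Finset.sum_congr rfl fun b _ => by rw [M2 t b]
  have EAB : ent μ (fun ω => (A ω, B ω))
      = -(∑ a, ∑ b, (∑ t, p (a, t, b)) * Real.log (∑ t, p (a, t, b))) / Real.log 2 := by
    rw [ent_eq]
    congr 2
    rw [Fintype.sum_prod_type]
    exact Finset.sum_congr rfl fun a _ => Finset.sum_congr rfl fun b _ => by rw [M4 a b]
  rw [ET, EAT, ETB, EAB]
  have hnum : -(∑ t, (∑ a, ∑ b, p (a, t, b)) * Real.log (∑ a, ∑ b, p (a, t, b)))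
      + -(∑ a, ∑ b, (∑ t, p (a, t, b)) * Real.log (∑ t, p (a, t, b)))
      ≤ -(∑ a, ∑ t, (∑ b, p (a, t, b)) * Real.log (∑ b, p (a, t, b)))
      + -(∑ t, ∑ b, (∑ a, p (a, t, b)) * Real.log (∑ a, p (a, t, b))) := by
    linarith
  calc -(∑ t, (∑ a, ∑ b, p (a, t, b)) * Real.log (∑ a, ∑ b, p (a, t, b))) / Real.log 2
        + -(∑ a, ∑ b, (∑ t, p (a, t, b)) * Real.log (∑ t, p (a, t, b))) / Real.log 2
      = (-(∑ t, (∑ a, ∑ b, p (a, t, b)) * Real.log (∑ a, ∑ b, p (a, t, b)))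
        + -(∑ a, ∑ b, (∑ t, p (a, t, b)) * Real.log (∑ t, p (a, t, b)))) / Real.log 2 := by
        ring
    _ ≤ (-(∑ a, ∑ t, (∑ b, p (a, t, b)) * Real.log (∑ b, p (a, t, b)))
        + -(∑ t, ∑ b, (∑ a, p (a, t, b)) * Real.log (∑ a, p (a, t, b)))) / Real.log 2 :=
        (div_le_div_iff_of_pos_right hL).mpr hnum
    _ = -(∑ a, ∑ t, (∑ b, p (a, t, b)) * Real.log (∑ b, p (a, t, b))) / Real.log 2
        + -(∑ t, ∑ b, (∑ a, p (a, t, b)) * Real.log (∑ a, p (a, t, b))) / Real.log 2 := by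
        ring

end UBparityAux

/-- **Upper bound of Theorem 2 (bounded statistical parity).** If `I(Y;S) ≤ ε` and
`I(X;Y) ≤ r` with `r, ε ≥ 0`, then `I(Y;T) ≤ min{H(T|S) + ε, H(T|X) + r}`. -/
theorem upper_bound_bounded_parity
    {Ω 𝒮 𝒳 𝒯 𝒴 : Type} [MeasurableSpace Ω] (μ : Measure Ω) [IsProbabilityMeasure μ]
    [Fintype 𝒮] [MeasurableSpace 𝒮] [MeasurableSingletonClass 𝒮]
    [Fintype 𝒳] [MeasurableSpace 𝒳] [MeasurableSingletonClass 𝒳]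
    [Fintype 𝒯] [MeasurableSpace 𝒯] [MeasurableSingletonClass 𝒯]
    [Fintype 𝒴] [MeasurableSpace 𝒴] [MeasurableSingletonClass 𝒴]
    (S : Ω → 𝒮) (X : Ω → 𝒳) (T : Ω → 𝒯) (Y : Ω → 𝒴)
    (hS : Measurable S) (hX : Measurable X) (hT : Measurable T) (hY : Measurable Y)
    (r ε : ℝ) (hr : 0 ≤ r) (hε : 0 ≤ ε)
    (hparity : mutInf μ Y S ≤ ε) (hrate : mutInf μ X Y ≤ r) :
    mutInf μ Y T ≤ min (condEnt μ T S + ε) (condEnt μ T X + r) := by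
  have K1 := UBparityAux.key_ent μ Y S T hY hS hT
  have K2 := UBparityAux.key_ent μ Y X T hY hX hT
  have sw : ent μ (fun ω => (Y ω, X ω)) = ent μ (fun ω => (X ω, Y ω)) :=
    UBparityAux.ent_pair_comm μ Y X
  rw [sw] at K2
  simp only [mutInf, condEnt] at hparity hrate ⊢
  apply le_min
  · linarith
  · linarith
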